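/- Let V1, V2 be subspaces of F_q^d with dim(V1) = d1, dim(V2) = d2, and suppose d3 + d1 ≤ d2. If V3 is a uniformly random d3-dimensional subspace of V2, then the probability that dim(V3 + V1) < d3 + d1 is at most 1/(q-1). -/

import Mathlib

open Module

section Aux
open Module Submodule Finset


lemma exists_linearEquiv_apply_eq {K V : Type*} [Field K] [AddCommGroup V] [Module K V]
    {x y : V} (hx : x ≠ 0) (hy : y ≠ 0) : ∃ e : V ≃ₗ[K] V, e x = y := by
  classical
  have lix := (linearIndepOn_singleton_iff (R := K) (v := id) (i := x)).mpr hx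
  have liy := (linearIndepOn_singleton_iff (R := K) (v := id) (i := y)).mpr hy
  let bx := Basis.extend lix
  let by' := Basis.extend liy
  have hxm : x ∈ lix.extend (Set.subset_univ _) := lix.subset_extend _ rfl
  have hym : y ∈ liy.extend (Set.subset_univ _) := liy.subset_extend _ rfl
  let e0 := bx.indexEquiv by'
  let σ : _ ≃ _ := Equiv.swap (e0 ⟨x, hxm⟩) ⟨y, hym⟩
  refine ⟨bx.equiv by' (e0.trans σ), ?_⟩
  have h1 : bx ⟨x, hxm⟩ = x := Basis.extend_apply_self _ _
  have h2 : by' ⟨y, hym⟩ = y := Basis.extend_apply_self _ _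
  have h3 := Basis.equiv_apply bx ⟨x, hxm⟩ by' (e0.trans σ)
  rw [h1] at h3
  rw [h3]
  show by' (σ (e0 ⟨x, hxm⟩)) = y
  rw [Equiv.swap_apply_left, h2]

section aux
variable {F M : Type} [Field F] [Fintype F] [AddCommGroup M] [Module F M] [Fintype M]

open scoped Classical

lemma cardNZ (W : Submodule F M) :
    (Finset.univ.filter fun x : M => x ∈ W ∧ x ≠ 0).card
      = Fintype.card F ^ finrank F ↥W - 1 := by
  have : Module.Finite F M := Module.Finite.of_finite
  have h1 : (Finset.univ.filter fun x : M => x ∈ W ∧ x ≠ 0)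
      = (Finset.univ.filter fun x : M => x ∈ W).erase 0 := by
    ext a; simp [Finset.mem_erase, and_comm]
  have h2 : (Finset.univ.filter fun x : M => x ∈ W).card = Fintype.card ↥W := by
    rw [Fintype.card_subtype]
  rw [h1, Finset.card_erase_of_mem (by simp [W.zero_mem]), h2,
    card_eq_pow_finrank (K := F) (V := ↥W)]

lemma count_const (d3 : ℕ) {x y : M} (hx : x ≠ 0) (hy : y ≠ 0) :
    (Finset.univ.filter fun W : Submodule F M => finrank F ↥W = d3 ∧ x ∈ W).card
      = (Finset.univ.filter fun W : Submodule F M => finrank F ↥W = d3 ∧ y ∈ W).card := by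
  obtain ⟨e, he⟩ := exists_linearEquiv_apply_eq (K := F) hx hy
  have hmap : ∀ W : Submodule F M, Submodule.map (↑e.symm : M →ₗ[F] M)
      (Submodule.map (↑e : M →ₗ[F] M) W) = W := by
    intro W; ext z; simp [Submodule.mem_map_equiv]
  have hmap' : ∀ W : Submodule F M, Submodule.map (↑e : M →ₗ[F] M)
      (Submodule.map (↑e.symm : M →ₗ[F] M) W) = W := by
    intro W; ext z; simp [Submodule.mem_map_equiv]
  refine Finset.card_bij' (fun W _ => Submodule.map (↑e : M →ₗ[F] M) W)
    (fun W _ => Submodule.map (↑e.symm : M →ₗ[F] M) W) ?_ ?_ ?_ ?_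
  · intro W hW
    simp only [Finset.mem_filter, Finset.mem_univ, true_and] at hW ⊢
    refine ⟨by rw [LinearEquiv.finrank_map_eq e W]; exact hW.1, ?_⟩
    rw [Submodule.mem_map_equiv]
    simpa [← he] using hW.2
  · intro W hW
    simp only [Finset.mem_filter, Finset.mem_univ, true_and] at hW ⊢
    refine ⟨by rw [LinearEquiv.finrank_map_eq e.symm W]; exact hW.1, ?_⟩
    rw [Submodule.mem_map_equiv]
    simpa [he] using hW.2
  · intro W _; exact hmap W
  · intro W _; exact hmap' W

lemma double_count (d3 : ℕ) (U : Submodule F M) :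
    ∑ x ∈ Finset.univ.filter (fun x : M => x ∈ U ∧ x ≠ 0),
      (Finset.univ.filter fun W : Submodule F M => finrank F ↥W = d3 ∧ x ∈ W).card
    = ∑ W ∈ Finset.univ.filter (fun W : Submodule F M => finrank F ↥W = d3),
        (Finset.univ.filter fun x : M => x ∈ U ⊓ W ∧ x ≠ 0).card := by
  calc ∑ x ∈ Finset.univ.filter (fun x : M => x ∈ U ∧ x ≠ 0),
      (Finset.univ.filter fun W : Submodule F M => finrank F ↥W = d3 ∧ x ∈ W).card
      = ∑ x ∈ (Finset.univ : Finset M), ∑ W ∈ (Finset.univ : Finset (Submodule F M)),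
          ite ((x ∈ U ∧ x ≠ 0) ∧ (finrank F ↥W = d3 ∧ x ∈ W)) 1 0 := by
        rw [Finset.sum_filter]
        refine Finset.sum_congr rfl fun x _ => ?_
        by_cases hx : x ∈ U ∧ x ≠ 0
        · rw [if_pos hx, Finset.card_filter]
          exact Finset.sum_congr rfl fun W _ => if_congr (and_iff_right hx).symm rfl rfl
        · rw [if_neg hx]
          exact (Finset.sum_eq_zero fun W _ => if_neg (fun h => hx h.1)).symm
    _ = ∑ W ∈ (Finset.univ : Finset (Submodule F M)), ∑ x ∈ (Finset.univ : Finset M),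
          ite ((x ∈ U ∧ x ≠ 0) ∧ (finrank F ↥W = d3 ∧ x ∈ W)) 1 0 := Finset.sum_comm
    _ = ∑ W ∈ Finset.univ.filter (fun W : Submodule F M => finrank F ↥W = d3),
        (Finset.univ.filter fun x : M => x ∈ U ⊓ W ∧ x ≠ 0).card := by
        rw [Finset.sum_filter]
        refine Finset.sum_congr rfl fun W _ => ?_
        by_cases hW : finrank F ↥W = d3
        · simp only [hW, if_true, Finset.card_filter]
          refine Finset.sum_congr rfl fun x _ => ?_
          refine if_congr ?_ rfl rfl
          simp only [Submodule.mem_inf]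
          tauto
        · simp [hW]

lemma key (d3 : ℕ) (W1 : Submodule F M) (hw : finrank F ↥W1 + d3 ≤ finrank F M) :
    (Fintype.card F - 1) *
      (Finset.univ.filter fun W : Submodule F M => finrank F ↥W = d3 ∧ W ⊓ W1 ≠ ⊥).card
      ≤ (Finset.univ.filter fun W : Submodule F M => finrank F ↥W = d3).card := by
  have hfin : Module.Finite F M := Module.Finite.of_finite
  set q := Fintype.card F with hq
  have hq2 : 2 ≤ q := Fintype.one_lt_card
  by_cases h0 : W1 = ⊥
  · have hempty : (Finset.univ.filter
        fun W : Submodule F M => finrank F ↥W = d3 ∧ W ⊓ W1 ≠ ⊥) = ∅ := by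
      apply Finset.filter_eq_empty_iff.mpr; intro W _; simp [h0]
    simp [hempty]
  · set w := finrank F ↥W1 with hwdef
    have hw1 : 1 ≤ w :=
      Nat.one_le_iff_ne_zero.mpr (fun h => h0 (Submodule.finrank_eq_zero.mp h))
    obtain ⟨x₀, hx₀m, hx₀⟩ := (Submodule.ne_bot_iff W1).mp h0
    set S := Finset.univ.filter (fun W : Submodule F M => finrank F ↥W = d3) with hS
    set Bad := Finset.univ.filter
      (fun W : Submodule F M => finrank F ↥W = d3 ∧ W ⊓ W1 ≠ ⊥) with hBad
    set n₀ := (Finset.univ.filter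
      fun W : Submodule F M => finrank F ↥W = d3 ∧ x₀ ∈ W).card with hn0
    have hsum_const : ∀ U : Submodule F M,
        ∑ x ∈ Finset.univ.filter (fun x : M => x ∈ U ∧ x ≠ 0),
          (Finset.univ.filter fun W : Submodule F M => finrank F ↥W = d3 ∧ x ∈ W).card
        = (q ^ finrank F ↥U - 1) * n₀ := by
      intro U
      have hcong : ∀ x ∈ Finset.univ.filter (fun x : M => x ∈ U ∧ x ≠ 0),
          (Finset.univ.filter
            fun W : Submodule F M => finrank F ↥W = d3 ∧ x ∈ W).card = n₀ := by
        intro x hx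
        simp only [Finset.mem_filter] at hx
        exact count_const d3 hx.2.2 hx₀
      rw [Finset.sum_congr rfl hcong, Finset.sum_const, smul_eq_mul, cardNZ U]
    have hC : (q ^ finrank F M - 1) * n₀ = S.card * (q ^ d3 - 1) := by
      have h := double_count (F := F) (M := M) d3 ⊤
      rw [hsum_const ⊤, finrank_top F M] at h
      rw [h]
      have : ∀ W ∈ S, (Finset.univ.filter
          fun x : M => x ∈ (⊤ : Submodule F M) ⊓ W ∧ x ≠ 0).card = q ^ d3 - 1 := by
        intro W hW
        simp only [hS, Finset.mem_filter] at hW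
        rw [top_inf_eq, cardNZ W, hW.2]
      rw [Finset.sum_congr rfl this, Finset.sum_const, smul_eq_mul]
    have hD : (q - 1) * Bad.card ≤ (q ^ w - 1) * n₀ := by
      have h := double_count (F := F) (M := M) d3 W1
      rw [hsum_const W1] at h
      have hBS : Bad ⊆ S := by
        intro W hW
        simp only [hBad, hS, Finset.mem_filter] at hW ⊢
        exact ⟨hW.1, hW.2.1⟩
      have h1 : ∀ W ∈ Bad, q - 1 ≤ (Finset.univ.filter
          fun x : M => x ∈ W1 ⊓ W ∧ x ≠ 0).card := by
        intro W hW
        simp only [hBad, Finset.mem_filter] at hW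
        have hWb : W1 ⊓ W ≠ ⊥ := by rw [inf_comm]; exact hW.2.2
        have hr : 1 ≤ finrank F ↥(W1 ⊓ W) :=
          Nat.one_le_iff_ne_zero.mpr (fun hz => hWb (Submodule.finrank_eq_zero.mp hz))
        have hle : q ≤ q ^ finrank F ↥(W1 ⊓ W) := Nat.le_self_pow (by omega) q
        rw [cardNZ (W1 ⊓ W), ← hq]
        omega
      calc (q - 1) * Bad.card = ∑ _W ∈ Bad, (q - 1) := by
            rw [Finset.sum_const, smul_eq_mul, mul_comm]
        _ ≤ ∑ W ∈ Bad, (Finset.univ.filter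
              fun x : M => x ∈ W1 ⊓ W ∧ x ≠ 0).card := Finset.sum_le_sum h1
        _ ≤ ∑ W ∈ S, (Finset.univ.filter
              fun x : M => x ∈ W1 ⊓ W ∧ x ≠ 0).card :=
            Finset.sum_le_sum_of_subset hBS
        _ = (q ^ w - 1) * n₀ := h.symm
    -- arithmetic finish
    have hkey : (q ^ w - 1) * (q ^ d3 - 1) ≤ q ^ finrank F M - 1 := by
      have hab : q ^ w * q ^ d3 ≤ q ^ finrank F M := by
        rw [← pow_add]; exact Nat.pow_le_pow_right (by omega) hw
      have ha : 2 ≤ q ^ w := le_trans hq2 (Nat.le_self_pow (by omega) q)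
      have hb : 1 ≤ q ^ d3 := Nat.one_le_pow _ _ (by omega)
      have expand : (q ^ w - 1) * (q ^ d3 - 1) + q ^ w + q ^ d3 = q ^ w * q ^ d3 + 1 := by
        obtain ⟨a', ha'⟩ : ∃ a', q ^ w = a' + 1 := ⟨q ^ w - 1, by omega⟩
        obtain ⟨b', hb'⟩ : ∃ b', q ^ d3 = b' + 1 := ⟨q ^ d3 - 1, by omega⟩
        rw [ha', hb', Nat.add_sub_cancel, Nat.add_sub_cancel]; ring
      generalize hX : (q ^ w - 1) * (q ^ d3 - 1) = X at expand ⊢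
      generalize hY : q ^ w * q ^ d3 = Y at expand hab
      omega
    have hdM2 : 2 ≤ q ^ finrank F M := by
      have : q ≤ q ^ finrank F M := Nat.le_self_pow (by omega) q
      omega
    have hchain : (q - 1) * Bad.card * (q ^ finrank F M - 1)
        ≤ S.card * (q ^ finrank F M - 1) := by
      calc (q - 1) * Bad.card * (q ^ finrank F M - 1)
          ≤ (q ^ w - 1) * n₀ * (q ^ finrank F M - 1) :=
            Nat.mul_le_mul_right _ hD
        _ = (q ^ w - 1) * ((q ^ finrank F M - 1) * n₀) := by ring
        _ = (q ^ w - 1) * (S.card * (q ^ d3 - 1)) := by rw [hC]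
        _ = S.card * ((q ^ w - 1) * (q ^ d3 - 1)) := by ring
        _ ≤ S.card * (q ^ finrank F M - 1) := Nat.mul_le_mul_left _ hkey
    exact Nat.le_of_mul_le_mul_right hchain (by omega)

end aux

end Aux

/-- Let `V1, V2` be subspaces of `F_q^d` with `dim V1 = d1`,
`dim V2 = d2`, and `d3 + d1 ≤ d2`. If `V3` is a uniformly random `d3`-dimensional
subspace of `V2`, then `Pr[dim (V3 + V1) < d3 + d1] ≤ 1/(q-1)`. -/
theorem stmt0 (q d d1 d2 d3 : ℕ) (F : Type) [Field F] [Fintype F]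
    (hq : Fintype.card F = q)
    (V1 V2 : Submodule F (Fin d → F))
    (h1 : finrank F V1 = d1) (h2 : finrank F V2 = d2)
    (h3 : d3 + d1 ≤ d2) :
    (Nat.card {V3 : Submodule F (Fin d → F) //
        V3 ≤ V2 ∧ finrank F V3 = d3 ∧ finrank F ↥(V3 ⊔ V1) < d3 + d1} : ℝ)
      ≤ (Nat.card {V3 : Submodule F (Fin d → F) // V3 ≤ V2 ∧ finrank F V3 = d3} : ℝ)
        / ((q : ℝ) - 1) := by
  classical
  have hq2 : 2 ≤ q := hq ▸ Fintype.one_lt_card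
  haveI : Fintype ↥V2 := Fintype.ofFinite _
  set W1 : Submodule F ↥V2 := Submodule.comap V2.subtype V1 with hW1
  have hcomap_map : ∀ W : Submodule F ↥V2,
      Submodule.comap V2.subtype (Submodule.map V2.subtype W) = W := fun W => by
    rw [Submodule.comap_map_eq, Submodule.ker_subtype, sup_bot_eq]
  have hmap_comap : ∀ V3 : Submodule F (Fin d → F), V3 ≤ V2 →
      Submodule.map V2.subtype (Submodule.comap V2.subtype V3) = V3 := fun V3 h => by
    rw [Submodule.map_comap_subtype, inf_eq_right.mpr h]
  have eP : ∀ P : Submodule F (Fin d → F) → Prop,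
      {V3 : Submodule F (Fin d → F) // V3 ≤ V2 ∧ P V3}
        ≃ {W : Submodule F ↥V2 // P (Submodule.map V2.subtype W)} := fun P =>
    { toFun := fun x => ⟨Submodule.comap V2.subtype x.1, by
        rw [hmap_comap x.1 x.2.1]; exact x.2.2⟩
      invFun := fun y => ⟨Submodule.map V2.subtype y.1,
        Submodule.map_subtype_le _ _, y.2⟩
      left_inv := fun x => Subtype.ext (hmap_comap x.1 x.2.1)
      right_inv := fun y => Subtype.ext (hcomap_map y.1) }
  -- translation of the bad condition
  have cond_iff : ∀ W : Submodule F ↥V2,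
      (finrank F ↥(Submodule.map V2.subtype W) = d3 ∧
        finrank F ↥(Submodule.map V2.subtype W ⊔ V1) < d3 + d1)
      ↔ (finrank F ↥W = d3 ∧ W ⊓ W1 ≠ ⊥) := by
    intro W
    rw [Submodule.finrank_map_subtype_eq]
    refine and_congr_right fun hW => ?_
    set V3 := Submodule.map V2.subtype W with hV3def
    have hV3le : V3 ≤ V2 := Submodule.map_subtype_le _ _
    have hV3 : finrank F ↥V3 = d3 := by
      rw [hV3def, Submodule.finrank_map_subtype_eq]; exact hW
    have hsum := Submodule.finrank_sup_add_finrank_inf_eq V3 V1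
    have hVW : V3 ⊓ V1 = Submodule.map V2.subtype (W ⊓ W1) := by
      rw [Submodule.map_inf _ (Submodule.injective_subtype V2), hW1,
        Submodule.map_comap_subtype, ← hV3def, ← inf_assoc, inf_eq_left.mpr hV3le]
    have hfr : finrank F ↥(V3 ⊓ V1) = finrank F ↥(W ⊓ W1) := by
      rw [hVW, Submodule.finrank_map_subtype_eq]
    have hbot : W ⊓ W1 ≠ ⊥ ↔ finrank F ↥(W ⊓ W1) ≠ 0 :=
      not_congr Submodule.finrank_eq_zero.symm
    rw [hbot, ← hfr, hV3, h1] at *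
    omega
  -- counts as Finset cards
  have hcard1 : Nat.card {V3 : Submodule F (Fin d → F) //
        V3 ≤ V2 ∧ finrank F V3 = d3 ∧ finrank F ↥(V3 ⊔ V1) < d3 + d1}
      = (Finset.univ.filter
          fun W : Submodule F ↥V2 => finrank F ↥W = d3 ∧ W ⊓ W1 ≠ ⊥).card := by
    rw [Nat.card_congr ((eP fun V3 => finrank F ↥V3 = d3 ∧
        finrank F ↥(V3 ⊔ V1) < d3 + d1).trans
      (Equiv.subtypeEquivRight cond_iff))]
    rw [Nat.card_eq_fintype_card, Fintype.card_subtype]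
  have hcard2 : Nat.card {V3 : Submodule F (Fin d → F) // V3 ≤ V2 ∧ finrank F V3 = d3}
      = (Finset.univ.filter fun W : Submodule F ↥V2 => finrank F ↥W = d3).card := by
    rw [Nat.card_congr ((eP fun V3 => finrank F ↥V3 = d3).trans
      (Equiv.subtypeEquivRight fun W => by rw [Submodule.finrank_map_subtype_eq]))]
    rw [Nat.card_eq_fintype_card, Fintype.card_subtype]
  -- apply key
  have hwle : finrank F ↥W1 + d3 ≤ finrank F ↥V2 := by
    have : finrank F ↥W1 ≤ d1 := by
      have h' : finrank F ↥(Submodule.map V2.subtype W1) = finrank F ↥W1 :=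
        Submodule.finrank_map_subtype_eq _ _
      have h'' : Submodule.map V2.subtype W1 ≤ V1 := by
        rw [hW1, Submodule.map_comap_subtype]; exact inf_le_right
      rw [← h', ← h1]
      exact Submodule.finrank_mono h''
    rw [h2]  -- finrank F ↥V2 = d2? h2 : finrank F ↥V2 = d2
    omega
  have hnat := key d3 W1 hwle
  rw [hq] at hnat
  rw [hcard1, hcard2]
  have hqpos : (0 : ℝ) < (q : ℝ) - 1 := by
    have : (2 : ℝ) ≤ (q : ℝ) := by exact_mod_cast hq2
    linarith
  rw [le_div_iff₀ hqpos]
  have hcast : ((q : ℝ) - 1) = ((q - 1 : ℕ) : ℝ) := by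
    have : 1 ≤ q := by omega
    push_cast [Nat.cast_sub this]
    ring
  rw [hcast, ← Nat.cast_mul, mul_comm]
  exact_mod_cast hnat
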